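/- arXiv:1309.4370 — 2 statements merged into one kernel-verified Lean document; each statement's English description precedes it below -/
import Mathlib

section
/- Let G be a self-adjoint operator on a Hilbert space H and S a bounded self-adjoint operator. With φ(x) = x/√(1+x²), one has the norm estimate ‖φ(G) − φ(G+S)‖ ≤ (2/π) ‖S‖ ∫₁^∞ (u/√(u²−1)) · (1/u²) du = ‖S‖, given the integral representation φ(G) − φ(G+S) = (1/π) ∫₁^∞ (u/√(u²−1)) [R(u) S R_S(u) + R(−u) S R_S(−u)] du, where R(u) = (G+iu)^{-1} and R_S(u) = (G+S+iu)^{-1}. In particular, the map S ↦ φ(G+S) is norm continuous in S. -/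
open MeasureTheory Set

open MeasureTheory Set in
private lemma aux_deriv : ∀ u ∈ Ioi (1:ℝ),
    HasDerivAt (fun u : ℝ => -Real.arcsin u⁻¹) (1 / (u * Real.sqrt (u ^ 2 - 1))) u := by
  intro u hu
  simp only [mem_Ioi] at hu
  have hu0 : (0:ℝ) < u := lt_trans one_pos hu
  have h1 : u⁻¹ ≠ -1 := by
    intro h; rw [inv_eq_iff_eq_inv] at h; norm_num at h; linarith
  have h2 : u⁻¹ ≠ 1 := by
    intro h; rw [inv_eq_iff_eq_inv] at h; norm_num at h; linarith
  have hinv : HasDerivAt (fun u : ℝ => u⁻¹) (-(u ^ 2)⁻¹) u := hasDerivAt_inv hu0.ne'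
  have := ((Real.hasDerivAt_arcsin h1 h2).comp u hinv).neg
  convert this using 1
  case e'_4 => rfl
  case e'_5 => rfl
  case e'_8 => rfl
  have hsq : (0:ℝ) < u ^ 2 - 1 := by nlinarith
  have hsqrt : Real.sqrt (1 - u⁻¹ ^ 2) = Real.sqrt (u ^ 2 - 1) / u := by
    rw [show (1:ℝ) - u⁻¹ ^ 2 = (u ^ 2 - 1) / u ^ 2 by field_simp,
      Real.sqrt_div hsq.le, Real.sqrt_sq hu0.le]
  rw [hsqrt]
  have h3 : Real.sqrt (u ^ 2 - 1) > 0 := Real.sqrt_pos.mpr hsq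
  field_simp

open MeasureTheory Set in
private lemma aux_tendsto :
    Filter.Tendsto (fun u : ℝ => -Real.arcsin u⁻¹) Filter.atTop (nhds 0) := by
  have : Filter.Tendsto (fun u : ℝ => Real.arcsin u⁻¹) Filter.atTop (nhds (Real.arcsin 0)) :=
    (Real.continuous_arcsin.tendsto 0).comp tendsto_inv_atTop_zero
  simpa using this.neg

open MeasureTheory Set in
private lemma aux_nonneg : ∀ u ∈ Ioi (1:ℝ), 0 ≤ 1 / (u * Real.sqrt (u ^ 2 - 1)) := by
  intro u hu
  simp only [mem_Ioi] at hu
  have : (0:ℝ) < u := lt_trans one_pos hu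
  positivity

open MeasureTheory Set in
private lemma aux_cont : ContinuousWithinAt (fun u : ℝ => -Real.arcsin u⁻¹) (Ici 1) 1 :=
  (((Real.continuous_arcsin.continuousAt).comp (continuousAt_inv₀ one_ne_zero)).neg).continuousWithinAt

open MeasureTheory Set in
private lemma aux_integral :
    (∫ u in Ioi (1:ℝ), 1 / (u * Real.sqrt (u ^ 2 - 1))) = Real.pi / 2 := by
  have := integral_Ioi_of_hasDerivAt_of_nonneg aux_cont aux_deriv aux_nonneg aux_tendsto
  simpa [Real.arcsin_one] using this

open MeasureTheory Set in
private lemma aux_integrable :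
    IntegrableOn (fun u : ℝ => 1 / (u * Real.sqrt (u ^ 2 - 1))) (Ioi 1) :=
  integrableOn_Ioi_deriv_of_nonneg aux_cont aux_deriv aux_nonneg aux_tendsto

/-- Let `G` be self-adjoint and `S` bounded self-adjoint, and
`φ(x) = x/√(1+x²)`.  Given the integral representation
`φ(G) − φ(G+S) = (1/π) ∫₁^∞ (u/√(u²−1)) [R(u) S R_S(u) + R(−u) S R_S(−u)] du`
with resolvents satisfying `‖R(u)‖ ≤ 1/|u|`, `‖R_S(u)‖ ≤ 1/|u|`, and using
`∫₁^∞ u⁻¹ (u²−1)^{-1/2} du = π/2`, one gets `‖φ(G) − φ(G+S)‖ ≤ ‖S‖`. -/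
theorem stmt4 {H : Type*} [NormedAddCommGroup H] [InnerProductSpace ℂ H] [CompleteSpace H]
    (G S : H →L[ℂ] H) (hG : IsSelfAdjoint G) (hS : IsSelfAdjoint S)
    (R RS : ℝ → (H →L[ℂ] H))
    (hR : ∀ u : ℝ, u ≠ 0 → ‖R u‖ ≤ 1 / |u|)
    (hRS : ∀ u : ℝ, u ≠ 0 → ‖RS u‖ ≤ 1 / |u|)
    (hInt : IntegrableOn (fun u : ℝ =>
        (u / Real.sqrt (u ^ 2 - 1)) • (R u * S * RS u + R (-u) * S * RS (-u)))
        (Ioi (1 : ℝ)))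
    (hrep : cfc (fun x : ℝ => x / Real.sqrt (1 + x ^ 2)) G
        - cfc (fun x : ℝ => x / Real.sqrt (1 + x ^ 2)) (G + S)
      = (1 / Real.pi) • ∫ u in Ioi (1 : ℝ),
          (u / Real.sqrt (u ^ 2 - 1)) • (R u * S * RS u + R (-u) * S * RS (-u))) :
    (∫ u in Ioi (1 : ℝ), 1 / (u * Real.sqrt (u ^ 2 - 1))) = Real.pi / 2 ∧
    ‖cfc (fun x : ℝ => x / Real.sqrt (1 + x ^ 2)) G
      - cfc (fun x : ℝ => x / Real.sqrt (1 + x ^ 2)) (G + S)‖ ≤ ‖S‖ := by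
  refine ⟨aux_integral, ?_⟩
  rw [hrep, norm_smul]
  have hπ : (0:ℝ) < Real.pi := Real.pi_pos
  have hbound : ‖∫ u in Ioi (1 : ℝ),
      (u / Real.sqrt (u ^ 2 - 1)) • (R u * S * RS u + R (-u) * S * RS (-u))‖
      ≤ ∫ u in Ioi (1 : ℝ), 2 * ‖S‖ * (1 / (u * Real.sqrt (u ^ 2 - 1))) := by
    refine norm_integral_le_of_norm_le ((aux_integrable.const_mul (2 * ‖S‖))) ?_
    filter_upwards [ae_restrict_mem measurableSet_Ioi] with u hu
    simp only [mem_Ioi] at hu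
    have hu0 : (0:ℝ) < u := lt_trans one_pos hu
    have hsq : (0:ℝ) < u ^ 2 - 1 := by nlinarith
    have h3 : (0:ℝ) < Real.sqrt (u ^ 2 - 1) := Real.sqrt_pos.mpr hsq
    have hX : ‖R u * S * RS u + R (-u) * S * RS (-u)‖ ≤ 2 * ‖S‖ / u ^ 2 := by
      have hRu := hR u hu0.ne'
      have hRSu := hRS u hu0.ne'
      have hRnu := hR (-u) (by simpa using hu0.ne')
      have hRSnu := hRS (-u) (by simpa using hu0.ne')
      rw [abs_of_pos hu0] at hRu hRSu
      rw [abs_neg, abs_of_pos hu0] at hRnu hRSnu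
      have h1 : ‖R u * S * RS u‖ ≤ (1/u) * ‖S‖ * (1/u) := by
        calc ‖R u * S * RS u‖ ≤ ‖R u * S‖ * ‖RS u‖ := norm_mul_le _ _
          _ ≤ ‖R u‖ * ‖S‖ * ‖RS u‖ := by
              gcongr; exact norm_mul_le _ _
          _ ≤ (1/u) * ‖S‖ * (1/u) := by gcongr <;> positivity
      have h2 : ‖R (-u) * S * RS (-u)‖ ≤ (1/u) * ‖S‖ * (1/u) := by
        calc ‖R (-u) * S * RS (-u)‖ ≤ ‖R (-u) * S‖ * ‖RS (-u)‖ := norm_mul_le _ _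
          _ ≤ ‖R (-u)‖ * ‖S‖ * ‖RS (-u)‖ := by
              gcongr; exact norm_mul_le _ _
          _ ≤ (1/u) * ‖S‖ * (1/u) := by gcongr <;> positivity
      calc ‖R u * S * RS u + R (-u) * S * RS (-u)‖
          ≤ ‖R u * S * RS u‖ + ‖R (-u) * S * RS (-u)‖ := norm_add_le _ _
        _ ≤ (1/u) * ‖S‖ * (1/u) + (1/u) * ‖S‖ * (1/u) := add_le_add h1 h2
        _ = 2 * ‖S‖ / u ^ 2 := by field_simp; ring
    rw [norm_smul, Real.norm_eq_abs, abs_of_nonneg (by positivity : (0:ℝ) ≤ u / Real.sqrt (u ^ 2 - 1))]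
    calc u / Real.sqrt (u ^ 2 - 1) * ‖R u * S * RS u + R (-u) * S * RS (-u)‖
        ≤ u / Real.sqrt (u ^ 2 - 1) * (2 * ‖S‖ / u ^ 2) := by gcongr <;> positivity
      _ = 2 * ‖S‖ * (1 / (u * Real.sqrt (u ^ 2 - 1))) := by field_simp
  calc ‖(1 / Real.pi : ℝ)‖ * ‖∫ u in Ioi (1 : ℝ),
        (u / Real.sqrt (u ^ 2 - 1)) • (R u * S * RS u + R (-u) * S * RS (-u))‖
      ≤ (1 / Real.pi) * ∫ u in Ioi (1 : ℝ), 2 * ‖S‖ * (1 / (u * Real.sqrt (u ^ 2 - 1))) := by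
        rw [Real.norm_eq_abs, abs_of_pos (by positivity)]
        gcongr
    _ = ‖S‖ := by
        rw [integral_const_mul, aux_integral]
        field_simp
end

section
/- The subalgebra of C₀(ℝ) generated by w(t) = 1/(1+t²) and the product w(t)v(t) = t/(1+t²)², where v(t) = t/(1+t²), separates points of ℝ and vanishes nowhere identically; hence by Stone–Weierstrass every function in C₀(ℝ) can be uniformly approximated by polynomials (without constant term) in w and wv. Moreover, every even function in C₀(ℝ) can be uniformly approximated by a polynomial in w without constant term, and every odd function in C₀(ℝ) by a function of the form P(w)·v with P(0) = 0. -/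
set_option maxHeartbeats 1000000

open Filter

lemma small_outside (f : ℝ → ℝ) (h0 : Tendsto f (cocompact ℝ) (nhds 0))
    {ε : ℝ} (hε : 0 < ε) : ∃ R : ℝ, 0 < R ∧ ∀ x : ℝ, R ≤ |x| → |f x| < ε := by
  have h1 : {x : ℝ | |f x| < ε} ∈ cocompact ℝ := by
    have := h0 (Metric.ball_mem_nhds (0:ℝ) hε)
    simpa [Metric.mem_ball, Real.dist_eq] using this
  rw [mem_cocompact] at h1
  obtain ⟨K, hK, hKs⟩ := h1
  obtain ⟨R, hR⟩ := hK.isBounded.subset_closedBall 0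
  refine ⟨max R 1 + 1, by positivity, fun x hx => ?_⟩
  apply hKs
  intro hxK
  have := hR hxK
  simp [Metric.mem_closedBall, Real.dist_eq] at this
  have : |x| ≤ max R 1 := this.trans (le_max_left _ _)
  linarith

lemma even_approx (f : ℝ → ℝ) (hc : Continuous f) (h0 : Tendsto f (cocompact ℝ) (nhds 0))
    (he : ∀ t : ℝ, f (-t) = f t) {ε : ℝ} (hε : 0 < ε) :
    ∃ P : Polynomial ℝ, P.coeff 0 = 0 ∧ ∀ t : ℝ, |f t - P.eval (1 / (1 + t ^ 2))| ≤ ε := by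
  set g : ℝ → ℝ := fun s => if s = 0 then 0 else f (Real.sqrt ((1 - s) / s)) with hgdef
  have hg0 : g 0 = 0 := by simp [hgdef]
  have hgc : ContinuousOn g (Set.Icc 0 1) := by
    intro s hs
    rcases eq_or_ne s 0 with rfl | hs0
    · rw [ContinuousWithinAt, hg0, Metric.tendsto_nhdsWithin_nhds]
      intro ε' hε'
      obtain ⟨R, hR, hRf⟩ := small_outside f h0 hε'
      refine ⟨1 / (1 + R ^ 2), by positivity, fun x hx hxd => ?_⟩
      rcases eq_or_ne x 0 with rfl | hx0
      · simpa [hgdef, Real.dist_eq] using hε'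
      · have hx1 : 0 < x := lt_of_le_of_ne hx.1 (Ne.symm hx0)
        have hxlt : x < 1 / (1 + R ^ 2) := by
          rw [Real.dist_eq, sub_zero, abs_of_pos hx1] at hxd; exact hxd
        have hR2 : R ^ 2 ≤ (1 - x) / x := by
          rw [le_div_iff₀ hx1]
          have h3 : x * (1 + R ^ 2) < 1 := (lt_div_iff₀ (by positivity)).mp hxlt
          nlinarith
        have hRs : R ≤ Real.sqrt ((1 - x) / x) := by
          calc R ≤ |R| := le_abs_self R
            _ = Real.sqrt (R ^ 2) := (Real.sqrt_sq_eq_abs R).symm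
            _ ≤ _ := Real.sqrt_le_sqrt hR2
        have := hRf _ (hRs.trans (le_abs_self _))
        simpa [hgdef, hx0, Real.dist_eq] using this
    · apply ContinuousAt.continuousWithinAt
      have hca : ContinuousAt (fun s : ℝ => f (Real.sqrt ((1 - s) / s))) s :=
        hc.continuousAt.comp (Real.continuous_sqrt.continuousAt.comp
          ((continuousAt_const.sub continuousAt_id).div continuousAt_id hs0))
      apply hca.congr
      filter_upwards [isOpen_ne.mem_nhds hs0] with a ha
      simp [hgdef, ha]
  obtain ⟨Q, hQ⟩ := exists_polynomial_near_of_continuousOn 0 1 g hgc (ε / 2) (by positivity)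
  refine ⟨Q - Polynomial.C (Q.coeff 0), by simp, fun t => ?_⟩
  have hw0 : (0:ℝ) < 1 + t ^ 2 := by positivity
  have hwne : 1 / (1 + t ^ 2) ≠ 0 := by positivity
  have hmem : 1 / (1 + t ^ 2) ∈ Set.Icc (0:ℝ) 1 :=
    ⟨by positivity, by rw [div_le_one hw0]; nlinarith⟩
  have hfg : f t = g (1 / (1 + t ^ 2)) := by
    simp only [hgdef, if_neg hwne]
    have harg : (1 - 1 / (1 + t ^ 2)) / (1 / (1 + t ^ 2)) = t ^ 2 := by field_simp; ring
    rw [harg, Real.sqrt_sq_eq_abs]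
    rcases abs_cases t with ⟨h, _⟩ | ⟨h, _⟩ <;> rw [h]
    exact (he t).symm
  have h1 := hQ _ hmem
  have h2 := hQ 0 (by norm_num)
  rw [hg0, sub_zero, ← Polynomial.coeff_zero_eq_eval_zero] at h2
  simp only [Polynomial.eval_sub, Polynomial.eval_C]
  rw [hfg]
  have hre : g (1 / (1 + t ^ 2)) - (Q.eval (1 / (1 + t ^ 2)) - Q.coeff 0)
      = (g (1 / (1 + t ^ 2)) - Q.eval (1 / (1 + t ^ 2))) + Q.coeff 0 := by ring
  rw [hre]
  have h1' : |g (1 / (1 + t ^ 2)) - Q.eval (1 / (1 + t ^ 2))| < ε / 2 := by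
    rw [abs_sub_comm]; exact h1
  calc |_| ≤ |g (1 / (1 + t ^ 2)) - Q.eval (1 / (1 + t ^ 2))| + |Q.coeff 0| := abs_add_le _ _
    _ ≤ ε := by linarith


lemma odd_approx (f : ℝ → ℝ) (hc : Continuous f) (h0 : Tendsto f (cocompact ℝ) (nhds 0))
    (ho : ∀ t : ℝ, f (-t) = - f t) {ε : ℝ} (hε : 0 < ε) :
    ∃ P : Polynomial ℝ, P.coeff 0 = 0 ∧
      ∀ t : ℝ, |f t - P.eval (1 / (1 + t ^ 2)) * (t / (1 + t ^ 2))| ≤ ε := by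
  have hf0 : f 0 = 0 := by have := ho 0; simp at this; linarith
  -- global bound C
  obtain ⟨R1, hR1, hR1f⟩ := small_outside f h0 one_pos
  obtain ⟨C1, hC1⟩ := (isCompact_Icc (a := -R1) (b := R1)).exists_bound_of_continuousOn
    hc.continuousOn
  set C := max C1 1 with hCdef
  have hCpos : (0:ℝ) < C := lt_of_lt_of_le one_pos (le_max_right _ _)
  have hfC : ∀ x : ℝ, |f x| ≤ C := by
    intro x
    rcases le_or_gt |x| R1 with h | h
    · have hx : x ∈ Set.Icc (-R1) R1 := by
        rw [Set.mem_Icc]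
        constructor
        · linarith [neg_abs_le x]
        · linarith [le_abs_self x]
      exact le_trans (by simpa using hC1 x hx) (le_max_left _ _)
    · exact le_trans (hR1f x h.le).le (le_max_right _ _)
  -- small near 0
  obtain ⟨δ, hδ, hδf⟩ := Metric.continuousAt_iff.mp hc.continuousAt (ε / 4) (by positivity)
  set ρ := δ / 2 with hρdef
  have hρ : 0 < ρ := by positivity
  have hρf : ∀ t : ℝ, |t| ≤ ρ → |f t| ≤ ε / 4 := by
    intro t ht
    have h1 : dist t 0 < δ := by rw [Real.dist_eq, sub_zero]; linarith
    have h2 := hδf h1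
    rw [Real.dist_eq, hf0, sub_zero] at h2
    linarith
  -- small outside R
  obtain ⟨R, hRpos, hRf⟩ := small_outside f h0 (show (0:ℝ) < ε / 4 by positivity)
  set d := ρ ^ 2 * ε / (12 * C) with hddef
  have hd : 0 < d := by positivity
  set m := 12 * C * (R ^ 2 + d) / ε + 1 with hmdef
  have hm : 0 < m := by positivity
  have hmR : 12 * C * R ^ 2 / ε ≤ m := by
    have h1 : 12 * C * R ^ 2 / ε ≤ 12 * C * (R ^ 2 + d) / ε := by gcongr <;> nlinarith
    rw [hmdef]; linarith
  have hmd : 12 * C * d / ε ≤ m := by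
    have h1 : 12 * C * d / ε ≤ 12 * C * (R ^ 2 + d) / ε := by gcongr <;> nlinarith
    rw [hmdef]; linarith
  clear_value d m
  set ψ : ℝ → ℝ := fun t => f t * ((1 + t ^ 2) * t * m / ((t ^ 2 + d) * (t ^ 2 + m)))
    with hψdef
  have hden : ∀ t : ℝ, (0:ℝ) < (t ^ 2 + d) * (t ^ 2 + m) := fun t => by positivity
  have hψc : Continuous ψ := by
    apply hc.mul
    apply Continuous.div
    · exact ((continuous_const.add (continuous_pow 2)).mul continuous_id).mul continuous_const
    · exact ((continuous_pow 2).add continuous_const).mul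
        ((continuous_pow 2).add continuous_const)
    · exact fun t => (hden t).ne'
  have hψe : ∀ t : ℝ, ψ (-t) = ψ t := by
    intro t
    simp only [hψdef]
    rw [ho t]
    ring
  have hψ0 : Tendsto ψ (cocompact ℝ) (nhds 0) := by
    have habs : Tendsto (fun t : ℝ => |t|) (cocompact ℝ) atTop := by
      exact (tendsto_norm_cocompact_atTop (E := ℝ)).congr (fun t => Real.norm_eq_abs t)
    have hA : Tendsto (fun t : ℝ => C * (2 * m) / |t|) (cocompact ℝ) (nhds 0) :=
      Tendsto.div_atTop tendsto_const_nhds habs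
    apply squeeze_zero_norm' ?_ hA
    filter_upwards [habs.eventually_ge_atTop 1] with t ht
    have ht0 : t ≠ 0 := by intro h; rw [h] at ht; simp at ht; linarith
    have ht2 : 1 ≤ t ^ 2 := by nlinarith [sq_abs t]
    have hAabs : |(1 + t ^ 2) * t * m / ((t ^ 2 + d) * (t ^ 2 + m))|
        = (1 + t ^ 2) * |t| * m / ((t ^ 2 + d) * (t ^ 2 + m)) := by
      rw [abs_div, abs_of_pos (hden t), abs_mul, abs_mul,
        abs_of_pos (show (0:ℝ) < 1 + t ^ 2 by positivity), abs_of_pos hm]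
    have h1 : ‖ψ t‖ ≤ C * ((1 + t ^ 2) * |t| * m / ((t ^ 2 + d) * (t ^ 2 + m))) := by
      rw [Real.norm_eq_abs, hψdef, abs_mul, hAabs]
      exact mul_le_mul_of_nonneg_right (hfC t) (by positivity)
    refine h1.trans ?_
    rw [mul_div_assoc' C, div_le_div_iff₀ (hden t) (abs_pos.mpr ht0)]
    nlinarith [sq_abs t, mul_pos hCpos hm, mul_nonneg (mul_pos hCpos hm).le hd.le,
      mul_nonneg (mul_nonneg (mul_pos hCpos hm).le hd.le) (sq_nonneg t),
      mul_nonneg (mul_pos hCpos hm).le (sq_nonneg t),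
      mul_le_mul_of_nonneg_left ht2 (mul_pos hCpos hm).le,
      mul_nonneg (mul_nonneg (mul_pos hCpos hm).le (sub_nonneg.mpr ht2)) (sq_nonneg t)]
  -- pointwise error of the multiplier
  have herr : ∀ t : ℝ, |f t - ψ t * (t / (1 + t ^ 2))| ≤ ε / 2 := by
    intro t
    have h1t : (0:ℝ) < 1 + t ^ 2 := by positivity
    have hcomp : ψ t * (t / (1 + t ^ 2))
        = f t * (t ^ 2 * m / ((t ^ 2 + d) * (t ^ 2 + m))) := by
      rw [hψdef]
      field_simp
    rw [hcomp]
    set F := t ^ 2 * m / ((t ^ 2 + d) * (t ^ 2 + m)) with hFdef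
    have hF0 : 0 ≤ F := by positivity
    have hF1 : F ≤ 1 := by
      rw [hFdef, div_le_one (hden t)]
      nlinarith [mul_nonneg hd.le hm.le, mul_nonneg hd.le (sq_nonneg t), sq_nonneg (t ^ 2)]
    have hfac : f t - f t * F = f t * (1 - F) := by ring
    rw [hfac, abs_mul, abs_of_nonneg (by linarith : (0:ℝ) ≤ 1 - F)]
    by_cases hcase : |t| ≤ ρ ∨ R ≤ |t|
    · have hfsmall : |f t| ≤ ε / 4 := by
        rcases hcase with h | h
        · exact hρf t h
        · exact (hRf t h).le
      calc |f t| * (1 - F) ≤ (ε / 4) * 1 :=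
            mul_le_mul hfsmall (by linarith) (by linarith) (by positivity)
        _ ≤ ε / 2 := by linarith
    · push_neg at hcase
      obtain ⟨hl, hr⟩ := hcase
      have hρ2 : ρ ^ 2 ≤ t ^ 2 := by nlinarith [sq_abs t, abs_nonneg t]
      have hR2 : t ^ 2 ≤ R ^ 2 := by nlinarith [sq_abs t, abs_nonneg t]
      have hdle : 12 * C * d ≤ t ^ 2 * ε := by
        rw [hddef]
        rw [mul_div_assoc']
        rw [mul_div_cancel_left₀ _ (by positivity : (12:ℝ) * C ≠ 0)]
        nlinarith
      have hRm' : 12 * C * R ^ 2 ≤ ε * m := by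
        rw [div_le_iff₀ hε] at hmR; linarith
      have hdm' : 12 * C * d ≤ ε * m := by
        rw [div_le_iff₀ hε] at hmd; linarith
      have e4 : t ^ 2 * m ≤ (t ^ 2 + d) * (t ^ 2 + m) := by
        nlinarith [mul_nonneg hd.le hm.le, mul_nonneg hd.le (sq_nonneg t), sq_nonneg (t ^ 2)]
      have hnum : 12 * C * ((t ^ 2 + d) * (t ^ 2 + m) - t ^ 2 * m)
          ≤ 3 * (ε * (t ^ 2 * m)) := by
        nlinarith [mul_le_mul_of_nonneg_left hRm' (sq_nonneg t),
          mul_le_mul_of_nonneg_left hdm' (sq_nonneg t),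
          mul_le_mul_of_nonneg_right hdle hm.le,
          mul_le_mul_of_nonneg_right (mul_le_mul_of_nonneg_left hR2 (show (0:ℝ) ≤ 12 * C by positivity)) (sq_nonneg t)]
      have hkey : 1 - F ≤ ε / (4 * C) := by
        have hFeq : 1 - F = ((t ^ 2 + d) * (t ^ 2 + m) - t ^ 2 * m)
            / ((t ^ 2 + d) * (t ^ 2 + m)) := by
          rw [hFdef]; field_simp
        rw [hFeq, div_le_div_iff₀ (hden t) (by positivity : (0:ℝ) < 4 * C)]
        nlinarith [hnum, mul_le_mul_of_nonneg_left e4 hε.le]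
      calc |f t| * (1 - F) ≤ C * (ε / (4 * C)) :=
            mul_le_mul (hfC t) hkey (by linarith) hCpos.le
        _ = ε / 4 := by field_simp
        _ ≤ ε / 2 := by linarith
  obtain ⟨Q, hQ0, hQ⟩ := even_approx ψ hψc hψ0 hψe (show (0:ℝ) < ε / 4 by positivity)
  refine ⟨Q, hQ0, fun t => ?_⟩
  have h1t : (0:ℝ) < 1 + t ^ 2 := by positivity
  have hv1 : |t / (1 + t ^ 2)| ≤ 1 := by
    rw [abs_div, abs_of_pos h1t, div_le_one h1t]
    nlinarith [sq_abs t, sq_nonneg (|t| - 1)]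
  have hsplit : f t - Q.eval (1 / (1 + t ^ 2)) * (t / (1 + t ^ 2))
      = (f t - ψ t * (t / (1 + t ^ 2)))
        + (ψ t - Q.eval (1 / (1 + t ^ 2))) * (t / (1 + t ^ 2)) := by ring
  rw [hsplit]
  calc _ ≤ |f t - ψ t * (t / (1 + t ^ 2))|
        + |(ψ t - Q.eval (1 / (1 + t ^ 2))) * (t / (1 + t ^ 2))| := abs_add_le _ _
    _ ≤ ε / 2 + (ε / 4) * 1 := by
        refine add_le_add (herr t) ?_
        rw [abs_mul]
        exact mul_le_mul (hQ t) hv1 (abs_nonneg _) (by positivity)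
    _ ≤ ε := by linarith

lemma full_approx (f : ℝ → ℝ) (hc : Continuous f) (h0 : Tendsto f (cocompact ℝ) (nhds 0))
    {ε : ℝ} (hε : 0 < ε) :
    ∃ p : MvPolynomial (Fin 2) ℝ, MvPolynomial.coeff 0 p = 0 ∧
      ∀ t : ℝ, |f t - MvPolynomial.eval
        (fun i : Fin 2 => if i = 0 then 1 / (1 + t ^ 2)
          else (1 / (1 + t ^ 2)) * (t / (1 + t ^ 2))) p| ≤ ε := by
  have hneg : Tendsto (fun t : ℝ => f (-t)) (cocompact ℝ) (nhds 0) := by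
    have hmap : Tendsto (fun t : ℝ => -t) (cocompact ℝ) (cocompact ℝ) := by
      exact (Homeomorph.neg ℝ).map_cocompact.le
    exact h0.comp hmap
  set fe : ℝ → ℝ := fun t => (f t + f (-t)) / 2 with hfe
  set fo : ℝ → ℝ := fun t => (f t - f (-t)) / 2 with hfo
  have hfec : Continuous fe := ((hc.add (hc.comp continuous_neg)).div_const 2)
  have hfoc : Continuous fo := ((hc.sub (hc.comp continuous_neg)).div_const 2)
  have hfe0 : Tendsto fe (cocompact ℝ) (nhds 0) := by
    have := (h0.add hneg).div_const 2
    simpa using this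
  have hfo0 : Tendsto fo (cocompact ℝ) (nhds 0) := by
    have := (h0.sub hneg).div_const 2
    simpa using this
  have hfee : ∀ t, fe (-t) = fe t := by intro t; simp [hfe, neg_neg]; ring
  have hfoo : ∀ t, fo (-t) = - fo t := by intro t; simp [hfo, neg_neg]; ring
  obtain ⟨Pe, hPe0, hPe⟩ := even_approx fe hfec hfe0 hfee (show (0:ℝ) < ε/2 by positivity)
  obtain ⟨Po, hPo0, hPo⟩ := odd_approx fo hfoc hfo0 hfoo (show (0:ℝ) < ε/2 by positivity)
  set p : MvPolynomial (Fin 2) ℝ :=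
    Polynomial.aeval (MvPolynomial.X 0) Pe
      + Polynomial.aeval (MvPolynomial.X (0 : Fin 2)) Po.divX * MvPolynomial.X 1 with hp
  have key : ∀ (g : Fin 2 → ℝ), MvPolynomial.eval g p
      = Pe.eval (g 0) + Po.divX.eval (g 0) * g 1 := by
    intro g
    rw [hp, map_add, map_mul, MvPolynomial.eval_X]
    congr 1
    · rw [Polynomial.aeval_def, MvPolynomial.algebraMap_eq, Polynomial.hom_eval₂,
        MvPolynomial.eval_X]
      congr 1
      · ext r; simp
    · congr 1
      rw [Polynomial.aeval_def, MvPolynomial.algebraMap_eq, Polynomial.hom_eval₂,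
        MvPolynomial.eval_X]
      congr 1
      ext r; simp
  refine ⟨p, ?_, fun t => ?_⟩
  · rw [← MvPolynomial.constantCoeff_eq] at *
    rw [hp, map_add, map_mul, MvPolynomial.constantCoeff_X, mul_zero, add_zero]
    rw [Polynomial.aeval_def, MvPolynomial.algebraMap_eq, Polynomial.hom_eval₂,
      MvPolynomial.constantCoeff_X, Polynomial.eval₂_at_zero]
    simpa using hPe0
  · rw [key]
    simp only [Fin.isValue, if_neg (by decide : (1 : Fin 2) ≠ 0), reduceIte]
    have hPoeval : Po.eval (1 / (1 + t ^ 2))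
        = (1 / (1 + t ^ 2)) * Po.divX.eval (1 / (1 + t ^ 2)) := by
      conv_lhs => rw [← Polynomial.X_mul_divX_add Po]
      rw [hPo0, map_zero, add_zero, Polynomial.eval_mul, Polynomial.eval_X]
    have hfsum : f t = fe t + fo t := by simp [hfe, hfo]; ring
    have hrw : f t - (Pe.eval (1 / (1 + t ^ 2))
        + Po.divX.eval (1 / (1 + t ^ 2)) * (1 / (1 + t ^ 2) * (t / (1 + t ^ 2))))
        = (fe t - Pe.eval (1 / (1 + t ^ 2)))
          + (fo t - Po.eval (1 / (1 + t ^ 2)) * (t / (1 + t ^ 2))) := by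
      rw [hPoeval, hfsum]; ring
    rw [hrw]
    calc _ ≤ |fe t - Pe.eval (1 / (1 + t ^ 2))|
          + |fo t - Po.eval (1 / (1 + t ^ 2)) * (t / (1 + t ^ 2))| := abs_add_le _ _
      _ ≤ ε / 2 + ε / 2 := add_le_add (hPe t) (hPo t)
      _ = ε := by ring

/-- With `w(t) = 1/(1+t²)` and `v(t) = t/(1+t²)` (so `v² = w − w²`),
the pair `(w, w·v)` separates points of `ℝ` and vanishes nowhere; by Stone–Weierstrass
every `f ∈ C₀(ℝ)` is a uniform limit of polynomials without constant term in `w` and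
`w·v`; moreover every even `f ∈ C₀(ℝ)` is a uniform limit of polynomials in `w` without
constant term, and every odd `f ∈ C₀(ℝ)` of functions `P(w)·v` with `P(0) = 0`. -/
theorem stmt8 :
    (∀ x y : ℝ, x ≠ y →
        (1 / (1 + x ^ 2) ≠ 1 / (1 + y ^ 2) ∨
         (1 / (1 + x ^ 2)) * (x / (1 + x ^ 2)) ≠ (1 / (1 + y ^ 2)) * (y / (1 + y ^ 2)))) ∧
    (∀ x : ℝ, ¬ (1 / (1 + x ^ 2) = 0 ∧ (1 / (1 + x ^ 2)) * (x / (1 + x ^ 2)) = 0)) ∧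
    (∀ f : ℝ → ℝ, Continuous f → Tendsto f (cocompact ℝ) (nhds 0) →
      ∀ ε : ℝ, 0 < ε →
        ∃ p : MvPolynomial (Fin 2) ℝ, MvPolynomial.coeff 0 p = 0 ∧
          ∀ t : ℝ, |f t - MvPolynomial.eval
            (fun i : Fin 2 => if i = 0 then 1 / (1 + t ^ 2)
              else (1 / (1 + t ^ 2)) * (t / (1 + t ^ 2))) p| ≤ ε) ∧
    (∀ f : ℝ → ℝ, Continuous f → Tendsto f (cocompact ℝ) (nhds 0) →
      (∀ t : ℝ, f (-t) = f t) →
      ∀ ε : ℝ, 0 < ε →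
        ∃ P : Polynomial ℝ, P.coeff 0 = 0 ∧
          ∀ t : ℝ, |f t - P.eval (1 / (1 + t ^ 2))| ≤ ε) ∧
    (∀ f : ℝ → ℝ, Continuous f → Tendsto f (cocompact ℝ) (nhds 0) →
      (∀ t : ℝ, f (-t) = - f t) →
      ∀ ε : ℝ, 0 < ε →
        ∃ P : Polynomial ℝ, P.coeff 0 = 0 ∧
          ∀ t : ℝ, |f t - P.eval (1 / (1 + t ^ 2)) * (t / (1 + t ^ 2))| ≤ ε) := by
  refine ⟨?_, ?_, ?_, ?_, ?_⟩
  · intro x y hxy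
    by_cases hw : 1 / (1 + x ^ 2) = 1 / (1 + y ^ 2)
    · right
      have hx2 : (0:ℝ) < 1 + x ^ 2 := by positivity
      have hy2 : (0:ℝ) < 1 + y ^ 2 := by positivity
      have hs : 1 + x ^ 2 = 1 + y ^ 2 := by
        field_simp at hw
        linarith
      intro h
      rw [← hs] at h
      field_simp at h
      exact hxy h
    · exact Or.inl hw
  · intro x ⟨h1, _⟩
    have : (0:ℝ) < 1 + x ^ 2 := by positivity
    rw [div_eq_zero_iff] at h1
    rcases h1 with h | h
    · exact one_ne_zero h
    · linarith
  · intro f hc h0 ε hε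
    exact full_approx f hc h0 hε
  · intro f hc h0 he ε hε
    exact even_approx f hc h0 he hε
  · intro f hc h0 ho ε hε
    exact odd_approx f hc h0 ho hε
end
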